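/- Assume the following weak form of the Filter Dichotomy: for every uniform filter F on ℕ there exists a function h : ℕ → ℕ such that h⁻¹[ℕ \ {n}] ∈ F for all n ∈ ℕ and {h[x] : x ∈ F} is either the filter of cofinite subsets of ℕ or a nonprincipal ultrafilter on ℕ. Then for every f : P(ω) → [0,1] satisfying f(x ∪ y) = f(x) + f(y) for disjoint x, y ⊆ ℕ, f({n}) = 0 for all n ∈ ℕ, and f(ℕ) = 1, the filter {x ⊆ ℕ : f(x) = 1} is not a universally measurable subset of the Cantor space P(ω). -/

import Mathlib

open MeasureTheory Set

/-- Identify a subset of ℕ with a point of the Cantor space `ℕ → Bool`. -/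
noncomputable def toCantor (x : Set ℕ) : ℕ → Bool :=
  fun n => @decide (n ∈ x) (Classical.dec _)

/-- A subset of a topological space is universally measurable if it is measurable with
respect to (the completion of) every σ-finite Borel measure on the space. -/
def UMSet {X : Type*} [TopologicalSpace X] (A : Set X) : Prop :=
  letI : MeasurableSpace X := borel X
  ∀ μ : Measure X, SigmaFinite μ → NullMeasurableSet A μ

/-- A (proper, set-theoretic) filter on ℕ. -/
def IsSetFilter (F : Set (Set ℕ)) : Prop :=
  Set.univ ∈ F ∧ ∅ ∉ F ∧ (∀ x ∈ F, ∀ y : Set ℕ, x ⊆ y → y ∈ F) ∧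
    (∀ x ∈ F, ∀ y ∈ F, x ∩ y ∈ F)

/-- A uniform filter on ℕ: a filter containing all cofinite sets. -/
def IsUniformFilter (F : Set (Set ℕ)) : Prop :=
  IsSetFilter F ∧ ∀ x : Set ℕ, xᶜ.Finite → x ∈ F

/-- An ultrafilter on ℕ. -/
def IsUltrafilterSet (G : Set (Set ℕ)) : Prop :=
  IsSetFilter G ∧ ∀ x : Set ℕ, x ∈ G ∨ xᶜ ∈ G

/-- A nonprincipal ultrafilter on ℕ: an ultrafilter containing no finite set. -/
def IsNonprincipalUltrafilterSet (G : Set (Set ℕ)) : Prop :=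
  IsUltrafilterSet G ∧ ∀ x ∈ G, x.Infinite

/-- The family `{h[x] : x ∈ F}` of images of members of `F` under `h`. -/
def imgFam (h : ℕ → ℕ) (F : Set (Set ℕ)) : Set (Set ℕ) :=
  (fun x : Set ℕ => h '' x) '' F

/-- The filter of cofinite subsets of ℕ. -/
def cofinFam : Set (Set ℕ) := {y : Set ℕ | yᶜ.Finite}


open TopologicalSpace
open scoped ENNReal symmDiff

noncomputable section AuxProof

def ofCantor (c : ℕ → Bool) : Set ℕ := {n | c n = true}





lemma ofCantor_toCantor (x : Set ℕ) : ofCantor (toCantor x) = x := by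
  ext n; simp [ofCantor, toCantor]

lemma toCantor_ofCantor (c : ℕ → Bool) : toCantor (ofCantor c) = c := by
  funext n; simp [ofCantor, toCantor]; by_cases hc : c n = true <;> simp [hc]

lemma toCantor_injective : Function.Injective toCantor := by
  intro x y h
  have := congrArg ofCantor h
  rwa [ofCantor_toCantor, ofCantor_toCantor] at this

lemma image_toCantor (S : Set (Set ℕ)) : toCantor '' S = ofCantor ⁻¹' S := by
  ext c
  constructor
  · rintro ⟨x, hx, rfl⟩; rwa [mem_preimage, ofCantor_toCantor]
  · intro hc; exact ⟨ofCantor c, hc, toCantor_ofCantor c⟩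

section AddFun
variable {g : Set ℕ → ℝ}
  (hb : ∀ x : Set ℕ, g x ∈ Set.Icc (0:ℝ) 1)
  (hadd : ∀ x y : Set ℕ, Disjoint x y → g (x ∪ y) = g x + g y)
  (hsing : ∀ n : ℕ, g {n} = 0) (huniv : g Set.univ = 1)

include hadd in
lemma g_empty : g ∅ = 0 := by
  have := hadd ∅ ∅ (disjoint_empty _)
  simp at this; linarith

include hadd hb in
lemma g_mono {x y : Set ℕ} (hxy : x ⊆ y) : g x ≤ g y := by
  have h1 : y = x ∪ (y \ x) := by rw [union_diff_cancel hxy]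
  have h2 := hadd x (y \ x) disjoint_sdiff_right
  rw [← h1] at h2
  have := (hb (y \ x)).1
  linarith

include hadd huniv in
lemma g_compl (x : Set ℕ) : g xᶜ = 1 - g x := by
  have h2 := hadd x xᶜ disjoint_compl_right
  rw [union_compl_self, huniv] at h2
  linarith

include hadd hsing in
lemma g_finite {x : Set ℕ} (hx : x.Finite) : g x = 0 := by
  refine Set.Finite.induction_on (motive := fun s _ => g s = 0) x hx (g_empty hadd) ?_
  intro a s ha _ ih
  have h1 : insert a s = {a} ∪ s := Set.insert_eq a s
  rw [h1, hadd _ _ (Set.disjoint_singleton_left.mpr ha), hsing, ih]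
  ring

include hadd hb in
omit hsing in
lemma g_inter {x y : Set ℕ} (hx : g x = 1) (hy : g y = 1) : g (x ∩ y) = 1 := by
  have h1 : x = (x ∩ y) ∪ (x \ y) := by rw [inter_union_diff]
  have h2 := hadd (x ∩ y) (x \ y) (disjoint_sdiff_right.mono_left inter_subset_right)
  rw [← h1] at h2
  have h3 : x ∪ y = y ∪ (x \ y) := by
    rw [union_comm x y, union_diff_self]
  have h4 := hadd y (x \ y) disjoint_sdiff_right
  rw [← h3] at h4
  have h5 : g (x ∪ y) ≤ 1 := (hb _).2
  have h6 : g (x ∩ y) ≤ 1 := (hb _).2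
  linarith

include hadd hsing huniv in
lemma g_cofinite {x : Set ℕ} (hx : xᶜ.Finite) : g x = 1 := by
  have := g_compl hadd huniv x
  rw [g_finite hadd hsing hx] at this
  linarith

include hb hadd hsing huniv in
lemma F_uniform : IsUniformFilter {x : Set ℕ | g x = 1} := by
  refine ⟨⟨huniv, ?_, ?_, ?_⟩, ?_⟩
  · simp only [mem_setOf_eq, g_empty hadd]; norm_num
  · intro x hx y hxy
    have := g_mono hb hadd hxy
    have := (hb y).2
    simp only [mem_setOf_eq] at hx ⊢
    linarith
  · intro x hx y hy
    exact g_inter hb hadd hx hy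
  · intro x hx
    exact g_cofinite hadd hsing huniv hx

end AddFun



noncomputable def K0 : PositiveCompacts (ℕ → Bool) :=
  ⟨⟨univ, isCompact_univ⟩, by simp⟩

noncomputable def mu0 : Measure (ℕ → Bool) := Measure.addHaarMeasure K0

instance : mu0.IsAddLeftInvariant := Measure.isAddLeftInvariant_addHaarMeasure K0
instance : mu0.Regular := Measure.regular_addHaarMeasure
instance : IsProbabilityMeasure mu0 := ⟨by
  have := Measure.addHaarMeasure_self (K₀ := K0)
  simpa [K0, mu0] using this⟩

/-- Cylinders indexed by `Fin n → Bool`. -/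
def CylF (n : ℕ) (s : Fin n → Bool) : Set (ℕ → Bool) := {c | ∀ i : Fin n, c i = s i}

lemma measurableSet_CylF (n : ℕ) (s : Fin n → Bool) : MeasurableSet (CylF n s) := by
  have : CylF n s = ⋂ i : Fin n, (fun c : ℕ → Bool => c i) ⁻¹' {s i} := by
    ext c; simp [CylF]
  rw [this]
  exact MeasurableSet.iInter fun i => (measurable_pi_apply (i : ℕ)) (measurableSet_singleton _)

lemma xor_eq_iff (a b c : Bool) : (xor a b = c ↔ b = xor a c) := by revert a b c; decide

lemma add_mem_CylF (e c : ℕ → Bool) (n : ℕ) (s : Fin n → Bool) :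
    e + c ∈ CylF n s ↔ c ∈ CylF n (fun i => xor (e i) (s i)) := by
  constructor <;> intro h i
  · exact (xor_eq_iff _ _ _).mp (h i)
  · exact (xor_eq_iff _ _ _).mpr (h i)

/-- A set whose membership depends only on coordinates `< n`. -/
def DependsOn' (n : ℕ) (C : Set (ℕ → Bool)) : Prop :=
  ∀ c c' : ℕ → Bool, (∀ i < n, c i = c' i) → c ∈ C → c' ∈ C

lemma finite_support (n : ℕ) (e : ℕ → Bool) (he : ∀ i, e i = true → i < n) :
    (ofCantor e).Finite :=
  (Set.finite_Iio n).subset (fun i hi => he i hi)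

lemma cyl_translate (B : Set (ℕ → Bool))
    (hB : ∀ e : ℕ → Bool, (ofCantor e).Finite → (fun c => e + c) ⁻¹' B = B)
    (n : ℕ) (s t : Fin n → Bool) :
    mu0 (B ∩ CylF n s) = mu0 (B ∩ CylF n t) := by
  classical
  set e : ℕ → Bool := fun i => if h : i < n then xor (s ⟨i, h⟩) (t ⟨i, h⟩) else false with he
  have hefin : (ofCantor e).Finite := by
    apply finite_support n
    intro i hi
    by_contra h
    simp [he, h] at hi
  have key : (fun c => e + c) ⁻¹' (B ∩ CylF n t) = B ∩ CylF n s := by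
    rw [preimage_inter, hB e hefin]
    congr 1
    ext c
    rw [mem_preimage, add_mem_CylF]
    have : (fun i : Fin n => xor (e i) (t i)) = s := by
      funext i
      simp only [he, i.isLt, dif_pos]
      cases s i <;> cases t i <;> rfl
    rw [this]
  rw [← key, measure_preimage_add]

lemma sum_cyl (B : Set (ℕ → Bool)) (hBm : NullMeasurableSet B mu0) (n : ℕ) :
    ∑ s : Fin n → Bool, mu0 (B ∩ CylF n s) = mu0 B := by
  classical
  have hcover : (⋃ s ∈ (Finset.univ : Finset (Fin n → Bool)), (B ∩ CylF n s)) = B := by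
    ext c
    constructor
    · intro hc
      obtain ⟨s, -, hcB, -⟩ := mem_iUnion₂.mp hc
      exact hcB
    · intro hc
      exact mem_iUnion₂.mpr ⟨fun i => c i, Finset.mem_univ _, hc, fun i => rfl⟩
  have hdisj : Set.Pairwise (↑(Finset.univ : Finset (Fin n → Bool)))
      (Function.onFun (AEDisjoint mu0) fun s => B ∩ CylF n s) := by
    intro s _ t _ hst
    apply Disjoint.aedisjoint
    rw [Set.disjoint_left]
    rintro c ⟨_, hcs⟩ ⟨_, hct⟩
    apply hst
    funext i
    rw [← hcs i, ← hct i]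
  have := measure_biUnion_finset₀ hdisj
    (fun s _ => hBm.inter (measurableSet_CylF n s).nullMeasurableSet)
  rw [hcover] at this
  rw [← this]

lemma univ_invariant : ∀ e : ℕ → Bool, (ofCantor e).Finite →
    (fun c : ℕ → Bool => e + c) ⁻¹' univ = univ := fun _ _ => rfl

lemma mu0_cyl_mul (B : Set (ℕ → Bool))
    (hB : ∀ e : ℕ → Bool, (ofCantor e).Finite → (fun c => e + c) ⁻¹' B = B)
    (hBm : NullMeasurableSet B mu0) (n : ℕ) (s : Fin n → Bool) :
    mu0 (B ∩ CylF n s) = mu0 B * mu0 (CylF n s) := by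
  classical
  set k : ℝ≥0∞ := (Fintype.card (Fin n → Bool) : ℝ≥0∞) with hk
  have hsum : ∀ (D : Set (ℕ → Bool)), NullMeasurableSet D mu0 →
      (∀ e : ℕ → Bool, (ofCantor e).Finite → (fun c => e + c) ⁻¹' D = D) →
      k * mu0 (D ∩ CylF n s) = mu0 D := by
    intro D hDm hDinv
    rw [← sum_cyl D hDm n]
    rw [Finset.sum_congr rfl (fun t _ => cyl_translate D hDinv n t s)]
    rw [Finset.sum_const, nsmul_eq_mul]
    simp [hk]
  have h1 : k * mu0 ((univ : Set (ℕ → Bool)) ∩ CylF n s) = 1 := by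
    rw [hsum univ nullMeasurableSet_univ univ_invariant, measure_univ]
  rw [univ_inter] at h1
  have h2 := hsum B hBm hB
  calc mu0 (B ∩ CylF n s) = mu0 (B ∩ CylF n s) * (k * mu0 (CylF n s)) := by rw [h1, mul_one]
    _ = (k * mu0 (B ∩ CylF n s)) * mu0 (CylF n s) := by ring
    _ = mu0 B * mu0 (CylF n s) := by rw [h2]

/-- extension of a finite pattern by `false`. -/
def extF (n : ℕ) (s : Fin n → Bool) : ℕ → Bool :=
  fun i => if h : i < n then s ⟨i, h⟩ else false

open Classical in
/-- the patterns appearing in a set depending on coordinates `< n`. -/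
noncomputable def patterns (n : ℕ) (C : Set (ℕ → Bool)) : Finset (Fin n → Bool) :=
  Finset.univ.filter (fun s => extF n s ∈ C)

lemma mem_patterns {n : ℕ} {C : Set (ℕ → Bool)} {s : Fin n → Bool} :
    s ∈ patterns n C ↔ extF n s ∈ C := by
  classical
  simp [patterns]

lemma dependsOn_decomp {n : ℕ} {C : Set (ℕ → Bool)} (hC : DependsOn' n C) :
    C = ⋃ s ∈ patterns n C, CylF n s := by
  ext c
  constructor
  · intro hc
    refine mem_iUnion₂.mpr ⟨fun i => c i, ?_, fun i => rfl⟩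
    rw [mem_patterns]
    refine hC c _ ?_ hc
    intro i hi
    simp [extF, hi]
  · intro hc
    obtain ⟨s, hs, hcs⟩ := mem_iUnion₂.mp hc
    rw [mem_patterns] at hs
    refine hC (extF n s) c ?_ hs
    intro i hi
    rw [hcs ⟨i, hi⟩]
    simp [extF, hi]

lemma measurableSet_dependsOn {n : ℕ} {C : Set (ℕ → Bool)} (hC : DependsOn' n C) :
    MeasurableSet C := by
  classical
  rw [dependsOn_decomp hC]
  exact MeasurableSet.biUnion (Finset.countable_toSet _) fun s _ => measurableSet_CylF n s

lemma mu0_mul_of_dependsOn (B : Set (ℕ → Bool))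
    (hB : ∀ e : ℕ → Bool, (ofCantor e).Finite → (fun c => e + c) ⁻¹' B = B)
    (hBm : NullMeasurableSet B mu0) {n : ℕ} {C : Set (ℕ → Bool)} (hC : DependsOn' n C) :
    mu0 (B ∩ C) = mu0 B * mu0 C := by
  classical
  set T := patterns n C with hT
  have hdecomp := dependsOn_decomp hC
  have hdisj : Set.Pairwise (↑T) (Function.onFun (AEDisjoint mu0) fun s => CylF n s) := by
    intro s _ t _ hst
    apply Disjoint.aedisjoint
    rw [Set.disjoint_left]
    intro c hcs hct
    apply hst
    funext i
    rw [← hcs i, ← hct i]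
  have hC_meas : ∀ s ∈ T, NullMeasurableSet (CylF n s) mu0 :=
    fun s _ => (measurableSet_CylF n s).nullMeasurableSet
  have hCsum : mu0 C = ∑ s ∈ T, mu0 (CylF n s) := by
    rw [hdecomp, ← hT]
    exact measure_biUnion_finset₀ hdisj hC_meas
  have hBC : B ∩ C = ⋃ s ∈ T, (B ∩ CylF n s) := by
    rw [hdecomp, ← hT]
    ext c
    simp only [mem_inter_iff, mem_iUnion]
    constructor
    · rintro ⟨hcB, hcC⟩
      obtain ⟨s, hs, hcs⟩ := hcC
      exact ⟨s, hs, hcB, hcs⟩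
    · rintro ⟨s, hs, hcB, hcs⟩
      exact ⟨hcB, ⟨s, hs, hcs⟩⟩
  have hdisj' : Set.Pairwise (↑T) (Function.onFun (AEDisjoint mu0) fun s => B ∩ CylF n s) := by
    intro s hs t ht hst
    exact AEDisjoint.mono (hdisj hs ht hst) inter_subset_right inter_subset_right
  rw [hBC, measure_biUnion_finset₀ hdisj'
      (fun s hs => hBm.inter (measurableSet_CylF n s).nullMeasurableSet)]
  rw [Finset.sum_congr rfl (fun s _ => mu0_cyl_mul B hB hBm n s), ← Finset.mul_sum, hCsum]

lemma dependsOn_mono {n m : ℕ} {C : Set (ℕ → Bool)} (hnm : n ≤ m) (hC : DependsOn' n C) :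
    DependsOn' m C :=
  fun c c' h hc => hC c c' (fun i hi => h i (lt_of_lt_of_le hi hnm)) hc

lemma dependsOn_union {n : ℕ} {C D : Set (ℕ → Bool)} (hC : DependsOn' n C) (hD : DependsOn' n D) :
    DependsOn' n (C ∪ D) := by
  rintro c c' h (hc | hc)
  · exact Or.inl (hC c c' h hc)
  · exact Or.inr (hD c c' h hc)

/-- From an open set and a point, extract a cylinder neighborhood. -/
lemma exists_cyl_subset {O : Set (ℕ → Bool)} (hO : IsOpen O) {k : ℕ → Bool} (hk : k ∈ O) :
    ∃ n : ℕ, {c : ℕ → Bool | ∀ i < n, c i = k i} ⊆ O := by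
  obtain ⟨I, u, hu, hsub⟩ := isOpen_pi_iff.mp hO k hk
  refine ⟨I.sup id + 1, ?_⟩
  intro c hc
  apply hsub
  intro i hi
  have hilt : i < I.sup id + 1 := Nat.lt_succ_of_le (Finset.le_sup (f := id) hi)
  rw [Set.mem_setOf_eq] at hc
  rw [hc i hilt]
  exact (hu i hi).2

lemma exists_clopen_between {K O : Set (ℕ → Bool)} (hK : IsCompact K) (hO : IsOpen O)
    (hKO : K ⊆ O) : ∃ (n : ℕ) (C : Set (ℕ → Bool)), DependsOn' n C ∧ K ⊆ C ∧ C ⊆ O := by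
  classical
  choose nn hnn using fun (k : K) => exists_cyl_subset hO (hKO k.2)
  set V : K → Set (ℕ → Bool) := fun k => {c | ∀ i < nn k, c i = (k : ℕ → Bool) i} with hV
  have hVopen : ∀ k, IsOpen (V k) := by
    intro k
    have : V k = ⋂ i ∈ Finset.range (nn k), (fun c : ℕ → Bool => c i) ⁻¹' {(k : ℕ → Bool) i} := by
      ext c; simp [hV]
    rw [this]
    exact isOpen_biInter_finset fun i _ =>
      (continuous_apply i).isOpen_preimage _ (isOpen_discrete _)
  have hcov : K ⊆ ⋃ k : K, V k := by
    intro k hk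
    exact mem_iUnion.mpr ⟨⟨k, hk⟩, fun i _ => rfl⟩
  obtain ⟨t, htcov⟩ := hK.elim_finite_subcover V hVopen hcov
  refine ⟨t.sup nn, ⋃ k ∈ t, V k, ?_, htcov, ?_⟩
  · intro c c' h hc
    obtain ⟨k, hk, hck⟩ := mem_iUnion₂.mp hc
    refine mem_iUnion₂.mpr ⟨k, hk, ?_⟩
    intro i hi
    rw [← h i (lt_of_lt_of_le hi (Finset.le_sup hk))]
    exact hck i hi
  · refine iUnion₂_subset fun k _ => ?_
    exact hnn k

lemma mu0_zero_or_one (B : Set (ℕ → Bool))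
    (hB : ∀ e : ℕ → Bool, (ofCantor e).Finite → (fun c => e + c) ⁻¹' B = B)
    (hBm : NullMeasurableSet B mu0) : mu0 B = 0 ∨ mu0 B = 1 := by
  obtain ⟨S, hSB, hSm, hSae⟩ := hBm.exists_measurable_subset_ae_eq
  have haeq : mu0 S = mu0 B := measure_congr hSae
  set a := mu0 B with ha
  have hale : a ≤ 1 := le_of_le_of_eq (measure_mono (subset_univ B)) measure_univ
  have hfin : a ≠ ⊤ := fun h => by simp [h] at hale
  -- a ≤ a * a
  have key : a ≤ a * a := by
    refine ENNReal.le_of_forall_pos_le_add fun ε hε _ => ?_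
    have hε' : (ε : ℝ≥0∞) ≠ 0 := by exact_mod_cast hε.ne'
    set η : ℝ≥0∞ := (ε : ℝ≥0∞) / 2 with hη
    have hη0 : η ≠ 0 := by
      simp only [hη, ne_eq, ENNReal.div_eq_zero_iff, ENNReal.ofNat_ne_top, or_false]
      exact hε'
    have hSfin : mu0 S ≠ ⊤ := by rw [haeq]; exact hfin
    obtain ⟨K, hKS, hKcomp, hKlt⟩ := hSm.exists_isCompact_lt_add hSfin hη0
    obtain ⟨O, hSO, hOopen, hOlt⟩ := S.exists_isOpen_lt_add hSfin hη0
    have hKO : K ⊆ O := hKS.trans hSO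
    obtain ⟨n, C, hCdep, hKC, hCO⟩ := exists_clopen_between hKcomp hOopen hKO
    have hCmeas : MeasurableSet C := measurableSet_dependsOn hCdep
    have hmul : mu0 (B ∩ C) = a * mu0 C := mu0_mul_of_dependsOn B hB hBm hCdep
    -- μ(S \ C) ≤ η
    have hKmeas : MeasurableSet K := hKcomp.isClosed.measurableSet
    have hdiff : mu0 (S \ K) ≤ η := by
      rw [measure_diff hKS hKmeas.nullMeasurableSet
        (ne_top_of_le_ne_top hSfin (measure_mono hKS))]
      exact tsub_le_iff_left.mpr hKlt.le
    have hSC : mu0 (S \ C) ≤ η := le_trans (measure_mono (diff_subset_diff_right hKC)) hdiff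
    -- μ C ≤ a + η
    have hCle : mu0 C ≤ a + η := by
      calc mu0 C ≤ mu0 O := measure_mono hCO
        _ ≤ mu0 S + η := hOlt.le
        _ = a + η := by rw [haeq]
    -- μ(S ∩ C) = μ(B ∩ C)
    have hSCeq : mu0 (S ∩ C) = mu0 (B ∩ C) :=
      measure_congr (Filter.EventuallyEq.inter hSae (Filter.EventuallyEq.refl _ _))
    have hsplit : mu0 S = mu0 (S ∩ C) + mu0 (S \ C) := (measure_inter_add_diff S hCmeas).symm
    have step : a ≤ a * mu0 C + η := by
      calc a = mu0 S := haeq.symm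
        _ = mu0 (S ∩ C) + mu0 (S \ C) := hsplit
        _ ≤ mu0 (S ∩ C) + η := add_le_add_right hSC _
        _ = mu0 (B ∩ C) + η := by rw [hSCeq]
        _ = a * mu0 C + η := by rw [hmul]
    have step2 : a * mu0 C ≤ a * a + η := by
      calc a * mu0 C ≤ a * (a + η) := mul_le_mul_right hCle a
        _ = a * a + a * η := by ring
        _ ≤ a * a + 1 * η := add_le_add_right (mul_le_mul_left hale η) _
        _ = a * a + η := by rw [one_mul]
    calc a ≤ a * mu0 C + η := step
      _ ≤ (a * a + η) + η := add_le_add_left step2 η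
      _ = a * a + (η + η) := by ring
      _ = a * a + ε := by
          rw [hη, ENNReal.add_halves]
  have key2 : a * a ≤ a := by
    calc a * a ≤ 1 * a := mul_le_mul_left hale a
      _ = a := one_mul a
  have haa : a * a = a := le_antisymm key2 key
  by_cases h0 : a = 0
  · exact Or.inl h0
  · right
    have h1 : a⁻¹ * (a * a) = a⁻¹ * a := by rw [haa]
    rwa [← mul_assoc, ENNReal.inv_mul_cancel h0 hfin, one_mul] at h1


section Ultra
variable {U : Set (Set ℕ)} (hU : IsNonprincipalUltrafilterSet U)

include hU

lemma ultra_compl_finite {s : Set ℕ} (hs : s.Finite) : sᶜ ∈ U := by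
  rcases hU.1.2 s with h | h
  · exact absurd hs (hU.2 s h)
  · exact h

lemma ultra_compl_iff (x : Set ℕ) : xᶜ ∈ U ↔ x ∉ U := by
  constructor
  · intro hxc hx
    have := hU.1.1.2.2.2 x hx xᶜ hxc
    rw [inter_compl_self] at this
    exact hU.1.1.2.1 this
  · intro hx
    rcases hU.1.2 x with h | h
    · exact absurd h hx
    · exact h

lemma ultra_symmDiff {s x : Set ℕ} (hs : s.Finite) : s ∆ x ∈ U ↔ x ∈ U := by
  have key : ∀ y : Set ℕ, y ∈ U → s ∆ y ∈ U := by
    intro y hy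
    have h1 : y ∩ sᶜ ∈ U := hU.1.1.2.2.2 y hy sᶜ (ultra_compl_finite hU hs)
    refine hU.1.1.2.2.1 _ h1 _ ?_
    intro n hn
    simp only [mem_inter_iff, mem_compl_iff] at hn
    exact Set.mem_symmDiff.mpr (Or.inr ⟨hn.1, hn.2⟩)
  constructor
  · intro h
    have := key _ h
    rwa [symmDiff_symmDiff_cancel_left] at this
  · exact key x

end Ultra

lemma ofCantor_add (e c : ℕ → Bool) : ofCantor (e + c) = (ofCantor e) ∆ (ofCantor c) := by
  ext n
  have : (e + c) n = xor (e n) (c n) := rfl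
  simp only [ofCantor, mem_setOf_eq, this, Set.mem_symmDiff]
  cases e n <;> cases c n <;> simp

lemma ultra_not_nullMeasurable {U : Set (Set ℕ)} (hU : IsNonprincipalUltrafilterSet U) :
    ¬ NullMeasurableSet (ofCantor ⁻¹' U) mu0 := by
  intro hm
  set B := ofCantor ⁻¹' U with hB
  have hinv : ∀ e : ℕ → Bool, (ofCantor e).Finite → (fun c => e + c) ⁻¹' B = B := by
    intro e he
    ext c
    simp only [mem_preimage, hB, ofCantor_add]
    exact ultra_symmDiff hU he
  have h01 := mu0_zero_or_one B hinv hm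
  -- complement via adding all-ones
  have hones : ofCantor (fun _ => true) = (univ : Set ℕ) := by
    ext n; simp [ofCantor]
  have hcompl : (fun c : ℕ → Bool => (fun _ => true) + c) ⁻¹' B = Bᶜ := by
    ext c
    simp only [mem_preimage, hB, mem_compl_iff, ofCantor_add, hones]
    have : (univ : Set ℕ) ∆ (ofCantor c) = (ofCantor c)ᶜ := by
      rw [Set.symmDiff_def]
      simp [Set.compl_eq_univ_diff]
    rw [this]
    exact ultra_compl_iff hU _
  have hBc : mu0 Bᶜ = mu0 B := by
    rw [← hcompl, measure_preimage_add]
  have hsum : mu0 B + mu0 Bᶜ = 1 := by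
    rw [measure_add_measure_compl₀ hm, measure_univ]
  rcases h01 with h | h
  · rw [h, hBc, h] at hsum
    simp at hsum
  · rw [h, hBc, h] at hsum
    have : (2 : ℝ≥0∞) = 1 := by rw [← hsum]; ring
    exact absurd this (by norm_num)


/-- prefix code of a boolean sequence -/
def pre (x : ℕ → Bool) (n : ℕ) : ℕ := Encodable.encode (List.ofFn (fun i : Fin n => x i))

def AD (x : ℕ → Bool) : Set ℕ := Set.range (pre x)

lemma pre_injective (x : ℕ → Bool) : Function.Injective (pre x) := by
  intro m n h
  have := Encodable.encode_injective h
  simpa using congrArg List.length this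

lemma AD_infinite (x : ℕ → Bool) : (AD x).Infinite :=
  Set.infinite_range_of_injective (pre_injective x)

lemma AD_almost_disjoint {x y : ℕ → Bool} (hxy : x ≠ y) : (AD x ∩ AD y).Finite := by
  obtain ⟨m, hm⟩ : ∃ m, x m ≠ y m := by
    by_contra h
    push_neg at h
    exact hxy (funext h)
  have hsub : AD x ∩ AD y ⊆ pre x '' (Set.Iic m) := by
    rintro z ⟨⟨n1, rfl⟩, ⟨n2, hn2⟩⟩
    have hll := Encodable.encode_injective hn2
    have hlen : n2 = n1 := by simpa using congrArg List.length hll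
    subst hlen
    have hagree := List.ofFn_inj.mp hll
    have hn1m : n2 ≤ m := by
      by_contra hlt
      push_neg at hlt
      exact hm (congrFun hagree ⟨m, hlt⟩).symm
    exact ⟨n2, hn1m, rfl⟩
  exact ((Set.finite_Iic m).image _).subset hsub

section Case1
variable {g : Set ℕ → ℝ}
  (hb : ∀ x : Set ℕ, g x ∈ Set.Icc (0:ℝ) 1)
  (hadd : ∀ x y : Set ℕ, Disjoint x y → g (x ∪ y) = g x + g y)
  (hsing : ∀ n : ℕ, g {n} = 0) (huniv : g Set.univ = 1)

include hadd hsing in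
lemma g_AD_sum (t : Finset (ℕ → Bool)) :
    ∑ x ∈ t, g (AD x) ≤ g (⋃ x ∈ t, AD x) := by
  classical
  induction t using Finset.induction_on with
  | empty => simp [g_empty hadd]
  | @insert a s ha ih =>
    rw [Finset.set_biUnion_insert]
    set Ut := ⋃ x ∈ s, AD x with hUt
    have hfin : (AD a ∩ Ut).Finite := by
      have hrw : AD a ∩ Ut = ⋃ x ∈ s, (AD a ∩ AD x) := by
        rw [hUt, inter_iUnion₂]
      rw [hrw]
      exact Set.Finite.biUnion s.finite_toSet fun x hx =>
        AD_almost_disjoint (by rintro rfl; exact ha hx)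
    have h1 : g (AD a ∪ Ut) = g (AD a \ Ut) + g Ut := by
      rw [← diff_union_self]
      exact hadd _ _ disjoint_sdiff_left
    have h2 : g (AD a) = g (AD a \ Ut) + g (AD a ∩ Ut) := by
      calc g (AD a) = g ((AD a \ Ut) ∪ (AD a ∩ Ut)) := by rw [diff_union_inter]
        _ = g (AD a \ Ut) + g (AD a ∩ Ut) :=
            hadd _ _ (disjoint_sdiff_left.mono_right inter_subset_right)
    have h3 : g (AD a ∩ Ut) = 0 := g_finite hadd hsing hfin
    rw [Finset.sum_insert ha]
    linarith

include hb hadd hsing huniv in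
lemma measure_filter_ne_cofin : {y : Set ℕ | g y = 1} ≠ cofinFam := by
  intro hEq
  have hpos : ∀ A : Set ℕ, A.Infinite → 0 < g A := by
    intro A hA
    rcases eq_or_lt_of_le (hb A).1 with h | h
    · exfalso
      have hc : g Aᶜ = 1 := by rw [g_compl hadd huniv A, ← h, sub_zero]
      have : Aᶜ ∈ cofinFam := by rw [← hEq]; exact hc
      rw [cofinFam, mem_setOf_eq, compl_compl] at this
      exact hA this
    · exact h
  have hcover : ∀ x : ℕ → Bool, ∃ k : ℕ, 1 / (k + 1 : ℝ) < g (AD x) := by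
    intro x
    obtain ⟨k, hk⟩ := exists_nat_one_div_lt (hpos _ (AD_infinite x))
    exact ⟨k, by exact_mod_cast hk⟩
  by_cases hall : ∀ k : ℕ, {x : ℕ → Bool | 1 / (k + 1 : ℝ) < g (AD x)}.Countable
  · -- then ℕ → Bool would be countable
    have huc : (univ : Set (ℕ → Bool)).Countable := by
      have : (univ : Set (ℕ → Bool)) ⊆ ⋃ k : ℕ, {x | 1 / (k + 1 : ℝ) < g (AD x)} := by
        intro x _
        obtain ⟨k, hk⟩ := hcover x
        exact mem_iUnion.mpr ⟨k, hk⟩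
      exact (Set.countable_iUnion hall).mono this
    haveI : Countable (ℕ → Bool) := Set.countable_univ_iff.mp huc
    haveI : Countable (Set ℕ) :=
      Function.Injective.countable (f := fun s : Set ℕ => fun n => @decide (n ∈ s) (Classical.dec _))
        (by
          intro a b hab
          ext n
          have := congrFun hab n
          simpa using this)
    obtain ⟨f, hf⟩ := exists_surjective_nat (Set ℕ)
    exact Function.cantor_surjective f hf
  · push_neg at hall
    obtain ⟨k, hk⟩ := hall
    have hinf : {x : ℕ → Bool | 1 / (k + 1 : ℝ) < g (AD x)}.Infinite :=
      fun hfin => hk hfin.countable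
    obtain ⟨t, hts, htcard⟩ := hinf.exists_subset_card_eq (k + 2)
    have hsum : (t.card : ℝ) * (1 / (k + 1 : ℝ)) ≤ ∑ x ∈ t, g (AD x) := by
      have := Finset.card_nsmul_le_sum t (fun x => g (AD x)) (1 / (k + 1 : ℝ))
        (fun x hx => (hts hx).le)
      rwa [nsmul_eq_mul] at this
    have hle1 : g (⋃ x ∈ t, AD x) ≤ 1 := (hb _).2
    have hchain := g_AD_sum hadd hsing t
    have hgt : (1 : ℝ) < (t.card : ℝ) * (1 / (k + 1 : ℝ)) := by
      rw [htcard]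
      rw [mul_one_div, lt_div_iff₀ (by positivity)]
      push_cast
      linarith
    linarith

end Case1

end AuxProof

/-- The weak Filter Dichotomy (with `h` not required to be finite-to-one) implies that for
every finitely additive `f : 𝒫(ω) → [0,1]` with `f(ω) = 1` vanishing on singletons, the
filter `{x | f x = 1}` is not universally measurable. -/
theorem stmt_13
    (weakFD : ∀ F : Set (Set ℕ), IsUniformFilter F →
      ∃ h : ℕ → ℕ, (∀ n : ℕ, h ⁻¹' ({n}ᶜ) ∈ F) ∧
        (imgFam h F = cofinFam ∨ IsNonprincipalUltrafilterSet (imgFam h F))) :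
    ∀ f : Set ℕ → ℝ, (∀ x : Set ℕ, f x ∈ Set.Icc (0 : ℝ) 1) →
      (∀ x y : Set ℕ, Disjoint x y → f (x ∪ y) = f x + f y) →
      (∀ n : ℕ, f {n} = 0) → f Set.univ = 1 →
      ¬ UMSet (toCantor '' {x : Set ℕ | f x = 1}) := by
  intro f hb hadd hsing huniv hUM
  set F := {x : Set ℕ | f x = 1} with hF
  have hFu : IsUniformFilter F := F_uniform hb hadd hsing huniv
  obtain ⟨h, hpre, hdich⟩ := weakFD F hFu
  have hFup : ∀ x ∈ F, ∀ y, x ⊆ y → y ∈ F := hFu.1.2.2.1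
  set g : Set ℕ → ℝ := fun y => f (h ⁻¹' y) with hg
  have hgb : ∀ y, g y ∈ Set.Icc (0:ℝ) 1 := fun y => hb _
  have hgadd : ∀ x y : Set ℕ, Disjoint x y → g (x ∪ y) = g x + g y := by
    intro x y hxy
    show f (h ⁻¹' (x ∪ y)) = f (h ⁻¹' x) + f (h ⁻¹' y)
    rw [preimage_union]
    exact hadd _ _ (hxy.preimage h)
  have hgsing : ∀ n : ℕ, g {n} = 0 := by
    intro n
    have h1 : f (h ⁻¹' ({n}ᶜ)) = 1 := hpre n
    rw [preimage_compl] at h1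
    have h2 := g_compl hadd huniv (h ⁻¹' {n})
    show f (h ⁻¹' {n}) = 0
    linarith
  have hguniv : g Set.univ = 1 := by
    show f (h ⁻¹' Set.univ) = 1
    rw [preimage_univ]; exact huniv
  rcases hdich with hcof | hultra
  · -- case 1 : image filter is the cofinite filter; contradiction, independent of hUM
    have hEq : {y : Set ℕ | g y = 1} = cofinFam := by
      ext y
      constructor
      · intro hy
        have h1 : h ⁻¹' y ∈ F := hy
        have h2 : h '' (h ⁻¹' y) ∈ imgFam h F := ⟨_, h1, rfl⟩
        rw [hcof] at h2
        exact h2.subset (compl_subset_compl.mpr (image_preimage_subset h y))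
      · intro hy
        have h2 : y ∈ imgFam h F := by rw [hcof]; exact hy
        obtain ⟨x, hxF, rfl⟩ := h2
        exact hFup x hxF _ (subset_preimage_image h x)
    exact absurd hEq (measure_filter_ne_cofin hgb hgadd hgsing hguniv)
  · -- case 2 : image filter is a nonprincipal ultrafilter
    set U := imgFam h F with hU
    have hUeq : U = {y : Set ℕ | h ⁻¹' y ∈ F} := by
      ext y
      constructor
      · rintro ⟨x, hxF, rfl⟩
        exact hFup x hxF _ (subset_preimage_image h x)
      · intro hy
        have h2 : h '' (h ⁻¹' y) ∈ U := ⟨_, hy, rfl⟩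
        exact hultra.1.1.2.2.1 _ h2 y (image_preimage_subset h y)
    set ψ : (ℕ → Bool) → (ℕ → Bool) := fun c n => c (h n) with hψ
    have hψcont : Continuous ψ := continuous_pi fun n => continuous_apply (h n)
    have hψmeas : Measurable ψ := hψcont.measurable
    have hpreim : ψ ⁻¹' (toCantor '' F) = ofCantor ⁻¹' U := by
      rw [image_toCantor, hUeq]
      ext c
      simp only [mem_preimage, mem_setOf_eq]
      rfl
    have hUM' : ∀ μ : Measure (ℕ → Bool), SigmaFinite μ →
        NullMeasurableSet (toCantor '' F) μ := by
      rw [BorelSpace.measurable_eq (α := ℕ → Bool)]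
      exact hUM
    set ν := mu0.map ψ with hν
    haveI : IsProbabilityMeasure ν := Measure.isProbabilityMeasure_map hψmeas.aemeasurable
    have hnm := hUM' ν inferInstance
    obtain ⟨S, hSsub, hSm, hSae⟩ := hnm.exists_measurable_subset_ae_eq
    have htrans : ψ ⁻¹' S =ᵐ[mu0] ψ ⁻¹' (toCantor '' F) := by
      obtain ⟨h1, h2⟩ := ae_eq_set.mp hSae
      refine ae_eq_set.mpr ⟨?_, ?_⟩
      · rw [← preimage_diff]
        refine le_antisymm ?_ zero_le
        calc mu0 (ψ ⁻¹' (S \ toCantor '' F)) ≤ ν (S \ toCantor '' F) :=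
              Measure.le_map_apply hψmeas.aemeasurable _
          _ = 0 := h1
      · rw [← preimage_diff]
        refine le_antisymm ?_ zero_le
        calc mu0 (ψ ⁻¹' (toCantor '' F \ S)) ≤ ν (toCantor '' F \ S) :=
              Measure.le_map_apply hψmeas.aemeasurable _
          _ = 0 := h2
    have hnull : NullMeasurableSet (ψ ⁻¹' (toCantor '' F)) mu0 :=
      ((hψmeas hSm).nullMeasurableSet).congr htrans
    rw [hpreim] at hnull
    exact ultra_not_nullMeasurable hultra hnull
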